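/- arXiv:1908.00972 — 3 statements merged into one kernel-verified Lean document; each statement's English description precedes it below -/
import Mathlib

section
/- Let n ≥ 1, let z ∈ ℂ \ {0}, and let β, γ : [0,1] → ℂ \ {0} be two loops based at z (β(0) = β(1) = γ(0) = γ(1) = z). Let δ be the commutator loop β·γ·β⁻¹·γ⁻¹ obtained by concatenating β, then γ, then β reversed, then γ reversed. Then every continuous lift ω of δ under the n-th power map (ω(t)^n = δ(t) for all t) is a closed loop: ω(1) = ω(0). -/
open Set

-- constancy of continuous n-th root-of-unity valued function on [0,1]
private lemma ratio_endpoint_eq {n : ℕ} (hn : 1 ≤ n) (f g : ℝ → ℂ)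
    (hf : Continuous f) (hg : Continuous g)
    (hfg : ∀ s ∈ Icc (0:ℝ) 1, f s ^ n = g s ^ n)
    (hg0 : ∀ s ∈ Icc (0:ℝ) 1, g s ≠ 0) :
    f 1 * g 0 = f 0 * g 1 := by
  have hn' : 0 < n := hn
  set S : Set ℂ := {w : ℂ | w ^ n = 1} with hS
  have hSfin : S.Finite := by
    apply Set.Finite.subset (Multiset.finite_toSet (Polynomial.nthRoots n (1:ℂ)))
    intro w hw
    rw [mem_setOf_eq, Polynomial.mem_nthRoots hn']
    exact hw
  haveI : Finite S := hSfin.to_subtype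
  haveI : PreconnectedSpace (Icc (0:ℝ) 1) := Subtype.preconnectedSpace isPreconnected_Icc
  set r : Icc (0:ℝ) 1 → S := fun t =>
    ⟨f t / g t, by
      have h1 := hfg t t.2
      have h2 := hg0 t t.2
      simp only [hS, mem_setOf_eq, div_pow, h1, div_self (pow_ne_zero n h2)]⟩ with hr
  have hrc : Continuous r := by
    apply Continuous.subtype_mk
    exact (hf.comp continuous_subtype_val).div (hg.comp continuous_subtype_val)
      (fun t => hg0 t t.2)
  have hconst : IsLocallyConstant r := (IsLocallyConstant.iff_continuous r).2 hrc
  have h10 := congrArg Subtype.val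
    (hconst.apply_eq_of_preconnectedSpace (⟨1, by norm_num⟩ : Icc (0:ℝ) 1) ⟨0, by norm_num⟩)
  simp only [hr] at h10
  have hg1 : g 1 ≠ 0 := hg0 1 (by norm_num)
  have hg0' : g 0 ≠ 0 := hg0 0 (by norm_num)
  field_simp at h10
  exact h10.trans (mul_comm _ _)

theorem nth_root_lift_of_commutator_loop_is_closed (n : ℕ) (hn : 1 ≤ n)
    (z : {z : ℂ // z ≠ 0}) (β γ : Path z z)
    (δ : Path z z) (hδ : δ = ((β.trans γ).trans β.symm).trans γ.symm)
    (ω : unitInterval → ℂ) (hω : Continuous ω)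
    (hlift : ∀ t, ω t ^ n = (δ t : ℂ)) :
    ω 1 = ω 0 := by
  set pr : ℝ → unitInterval := Set.projIcc 0 1 zero_le_one with hpr
  have hprc : Continuous pr := continuous_projIcc
  have hco : ∀ x ∈ Icc (0:ℝ) 1, ((pr x : unitInterval) : ℝ) = x := by
    intro x hx
    rw [hpr, Set.projIcc_of_mem zero_le_one hx]
  have hmk : ∀ x (hx : x ∈ Icc (0:ℝ) 1), pr x = ⟨x, hx⟩ := by
    intro x hx
    rw [hpr, Set.projIcc_of_mem zero_le_one hx]
  have hone : pr 1 = 1 := by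
    rw [hmk 1 (by norm_num)]; rfl
  have hzero : pr 0 = 0 := by
    rw [hmk 0 (by norm_num)]; rfl
  -- evaluation of δ on the four pieces
  have hA : ∀ s ∈ Icc (0:ℝ) 1, (δ (pr (s/8)) : ℂ) = (β (pr s) : ℂ) := by
    intro s hs
    obtain ⟨hs0, hs1⟩ := hs
    have hc : ((pr (s/8) : unitInterval) : ℝ) = s / 8 := hco _ (by constructor <;> linarith)
    rw [hδ, Path.trans_apply, dif_pos (by rw [hc]; linarith),
      Path.trans_apply, dif_pos (by simp only [hc]; linarith),
      Path.trans_apply, dif_pos (by simp only [hc]; linarith),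
      hmk s ⟨hs0, hs1⟩]
    exact congrArg _ (congrArg β (Subtype.ext (by simp only [hc]; ring)))
  have hB : ∀ s ∈ Icc (0:ℝ) 1, (δ (pr ((1+s)/8)) : ℂ) = (γ (pr s) : ℂ) := by
    intro s hs
    obtain ⟨hs0, hs1⟩ := hs
    have hc : ((pr ((1+s)/8) : unitInterval) : ℝ) = (1+s)/8 :=
      hco _ (by constructor <;> linarith)
    rcases eq_or_lt_of_le hs0 with h0 | h0
    · subst h0
      rw [hδ, Path.trans_apply, dif_pos (by rw [hc]; linarith),
        Path.trans_apply, dif_pos (by simp only [hc]; linarith),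
        Path.trans_apply, dif_pos (by simp only [hc]; linarith), hzero]
      trans ((β 1 : {z : ℂ // z ≠ 0}) : ℂ)
      · exact congrArg _ (congrArg β (Subtype.ext (by norm_num at hc; norm_num [hc])))
      · rw [Path.target, Path.source]
    · rw [hδ, Path.trans_apply, dif_pos (by rw [hc]; linarith),
        Path.trans_apply, dif_pos (by simp only [hc]; linarith),
        Path.trans_apply, dif_neg (by simp only [hc]; push_neg; linarith),
        hmk s ⟨hs0, hs1⟩]
      exact congrArg _ (congrArg γ (Subtype.ext (by simp only [hc]; ring)))
  have hC : ∀ s ∈ Icc (0:ℝ) 1, (δ (pr ((1+s)/4)) : ℂ) = (β (pr (1-s)) : ℂ) := by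
    intro s hs
    obtain ⟨hs0, hs1⟩ := hs
    have hc : ((pr ((1+s)/4) : unitInterval) : ℝ) = (1+s)/4 :=
      hco _ (by constructor <;> linarith)
    rcases eq_or_lt_of_le hs0 with h0 | h0
    · subst h0
      rw [hδ, Path.trans_apply, dif_pos (by rw [hc]; linarith),
        Path.trans_apply, dif_pos (by simp only [hc]; linarith),
        Path.trans_apply, dif_neg (by simp only [hc]; norm_num)]
      trans ((γ 1 : {z : ℂ // z ≠ 0}) : ℂ)
      · exact congrArg _ (congrArg γ (Subtype.ext (by norm_num at hc; norm_num [hc])))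
      · rw [Path.target, show ((1:ℝ) - 0) = 1 by norm_num, hone, Path.target]
    · rw [hδ, Path.trans_apply, dif_pos (by rw [hc]; linarith),
        Path.trans_apply, dif_neg (by simp only [hc]; push_neg; linarith),
        hmk (1-s) ⟨by linarith, by linarith⟩]
      simp only [Path.symm_apply, Function.comp_apply]
      exact congrArg _ (congrArg β (Subtype.ext (by
        simp only [unitInterval.coe_symm_eq, hc]; ring)))
  have hD : ∀ s ∈ Icc (0:ℝ) 1, (δ (pr ((1+s)/2)) : ℂ) = (γ (pr (1-s)) : ℂ) := by
    intro s hs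
    obtain ⟨hs0, hs1⟩ := hs
    have hc : ((pr ((1+s)/2) : unitInterval) : ℝ) = (1+s)/2 :=
      hco _ (by constructor <;> linarith)
    rcases eq_or_lt_of_le hs0 with h0 | h0
    · subst h0
      rw [hδ, Path.trans_apply, dif_pos (by rw [hc]; linarith),
        Path.trans_apply, dif_neg (by simp only [hc]; norm_num)]
      trans ((β.symm 1 : {z : ℂ // z ≠ 0}) : ℂ)
      · exact congrArg _ (congrArg β.symm (Subtype.ext (by norm_num at hc; norm_num [hc])))
      · rw [Path.target, show ((1:ℝ) - 0) = 1 by norm_num, hone, Path.target]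
    · rw [hδ, Path.trans_apply, dif_neg (by simp only [hc]; push_neg; linarith),
        hmk (1-s) ⟨by linarith, by linarith⟩]
      simp only [Path.symm_apply, Function.comp_apply]
      exact congrArg _ (congrArg γ (Subtype.ext (by
        simp only [unitInterval.coe_symm_eq, hc]; ring)))
  -- the four pieces of ω
  set b : ℝ → ℂ := fun s => ω (pr (s/8)) with hbdef
  set c : ℝ → ℂ := fun s => ω (pr ((1+s)/8)) with hcdef
  set d : ℝ → ℂ := fun s => ω (pr ((1+s)/4)) with hddef
  set e : ℝ → ℂ := fun s => ω (pr ((1+s)/2)) with hedef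
  have hbc : Continuous b := hω.comp (hprc.comp (by fun_prop))
  have hcc : Continuous c := hω.comp (hprc.comp (by fun_prop))
  have hdc : Continuous d := hω.comp (hprc.comp (by fun_prop))
  have hec : Continuous e := hω.comp (hprc.comp (by fun_prop))
  have hbp : ∀ s ∈ Icc (0:ℝ) 1, b s ^ n = (β (pr s) : ℂ) :=
    fun s hs => (hlift _).trans (hA s hs)
  have hcp : ∀ s ∈ Icc (0:ℝ) 1, c s ^ n = (γ (pr s) : ℂ) :=
    fun s hs => (hlift _).trans (hB s hs)
  have hdp : ∀ s ∈ Icc (0:ℝ) 1, d s ^ n = (β (pr (1-s)) : ℂ) :=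
    fun s hs => (hlift _).trans (hC s hs)
  have hep : ∀ s ∈ Icc (0:ℝ) 1, e s ^ n = (γ (pr (1-s)) : ℂ) :=
    fun s hs => (hlift _).trans (hD s hs)
  have hn' : 0 < n := hn
  have hbne : ∀ s ∈ Icc (0:ℝ) 1, b s ≠ 0 := by
    intro s hs
    have := hbp s hs
    intro h
    rw [h, zero_pow hn'.ne'] at this
    exact (β (pr s)).2 this.symm
  have hcne : ∀ s ∈ Icc (0:ℝ) 1, c s ≠ 0 := by
    intro s hs
    have := hcp s hs
    intro h
    rw [h, zero_pow hn'.ne'] at this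
    exact (γ (pr s)).2 this.symm
  have hmem : ∀ s ∈ Icc (0:ℝ) 1, (1 - s) ∈ Icc (0:ℝ) 1 := by
    intro s hs
    exact ⟨by linarith [hs.2], by linarith [hs.1]⟩
  -- two lifts of the same path differ by a constant root of unity
  have h1 : (fun s => d (1-s)) 1 * b 0 = (fun s => d (1-s)) 0 * b 1 := by
    apply ratio_endpoint_eq hn _ _ (hdc.comp (by fun_prop)) hbc
    · intro s hs
      have := hdp (1-s) (hmem s hs)
      show d (1-s) ^ n = b s ^ n
      rw [this, hbp s hs]
      norm_num
    · exact hbne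
  have h2 : (fun s => e (1-s)) 1 * c 0 = (fun s => e (1-s)) 0 * c 1 := by
    apply ratio_endpoint_eq hn _ _ (hec.comp (by fun_prop)) hcc
    · intro s hs
      have := hep (1-s) (hmem s hs)
      show e (1-s) ^ n = c s ^ n
      rw [this, hcp s hs]
      norm_num
    · exact hcne
  simp only [] at h1 h2
  norm_num at h1 h2
  -- junction identities
  have jb0 : b 0 = ω 0 := by rw [hbdef]; norm_num [hzero]
  have jbc : b 1 = c 0 := by rw [hbdef, hcdef]; norm_num
  have jcd : c 1 = d 0 := by rw [hcdef, hddef]; norm_num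
  have jde : d 1 = e 0 := by rw [hddef, hedef]; norm_num
  have je1 : e 1 = ω 1 := by rw [hedef]; norm_num [hone]
  have hc1ne : c 1 ≠ 0 := hcne 1 (by norm_num)
  -- h1 : d 0 * b 0 = d 1 * b 1 ; h2 : e 0 * c 0 = e 1 * c 1
  apply mul_left_cancel₀ hc1ne
  calc c 1 * ω 1 = e 1 * c 1 := by rw [← je1]; ring
    _ = e 0 * c 0 := h2.symm
    _ = d 1 * b 1 := by rw [← jde, ← jbc]
    _ = d 0 * b 0 := h1.symm
    _ = c 1 * ω 0 := by rw [← jcd, jb0]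
end

section
/- There do not exist continuous functions f, g : ℂ × ℂ → ℂ such that for all (a₀, a₁) ∈ ℂ × ℂ, the values f(a₀,a₁) and g(a₀,a₁) are the two roots of the monic quadratic z² + a₁ z + a₀, i.e., such that f(a₀,a₁) + g(a₀,a₁) = −a₁ and f(a₀,a₁) · g(a₀,a₁) = a₀ for all a₀, a₁ ∈ ℂ. -/
theorem no_continuous_pair_of_quadratic_roots :
    ¬ ∃ f g : ℂ × ℂ → ℂ, Continuous f ∧ Continuous g ∧
      ∀ a₀ a₁ : ℂ, f (a₀, a₁) + g (a₀, a₁) = -a₁ ∧ f (a₀, a₁) * g (a₀, a₁) = a₀ := by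
  rintro ⟨f, g, hf, hg, h⟩
  -- f (z, 0) ^ 2 = -z
  have hsq : ∀ z : ℂ, f (z, 0) ^ 2 = -z := by
    intro z
    obtain ⟨h1, h2⟩ := h z 0
    have hgz : g (z, 0) = -f (z, 0) := by linear_combination h1
    rw [hgz] at h2
    ring_nf
    ring_nf at h2
    linear_combination -h2
  set φ : ℝ → ℂ := fun t => f (-Complex.exp (2 * t * Complex.I), 0) *
      Complex.exp (-(t * Complex.I)) with hφ
  have hφc : Continuous φ := by
    apply Continuous.mul
    · exact hf.comp ((Complex.continuous_exp.comp (by fun_prop)).neg.prodMk continuous_const)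
    · exact Complex.continuous_exp.comp (by fun_prop)
  have hφsq : ∀ t : ℝ, φ t ^ 2 = 1 := by
    intro t
    have := hsq (-Complex.exp (2 * t * Complex.I))
    rw [hφ]
    simp only
    rw [mul_pow, this, neg_neg, ← Complex.exp_nat_mul, ← Complex.exp_add]
    rw [show 2 * (t:ℂ) * Complex.I + ((2 : ℕ) : ℂ) * -(↑t * Complex.I) = 0 by push_cast; ring]
    exact Complex.exp_zero
  have hφval : ∀ t : ℝ, φ t = 1 ∨ φ t = -1 := by
    intro t
    have := hφsq t
    rw [sq, mul_self_eq_one_iff] at this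
    exact this
  -- φ 0 = f (-1, 0), φ π = -f (-1, 0)
  have h0 : φ 0 = f (-1, 0) := by
    simp [hφ]
  have hπ : φ Real.pi = -f (-1, 0) := by
    rw [hφ]
    simp only
    have e2 : Complex.exp (2 * (Real.pi : ℂ) * Complex.I) = 1 := by
      rw [show 2 * (Real.pi : ℂ) * Complex.I = 2 * Real.pi * Complex.I by ring]
      exact_mod_cast Complex.exp_two_pi_mul_I
    have eneg : Complex.exp (-((Real.pi : ℂ) * Complex.I)) = -1 := by
      rw [Complex.exp_neg, Complex.exp_pi_mul_I]
      norm_num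
    rw [e2, eneg]
    ring
  -- Re φ is continuous, takes values ±1, and changes sign
  set ψ : ℝ → ℝ := fun t => (φ t).re with hψ
  have hψc : Continuous ψ := Complex.continuous_re.comp hφc
  have hψval : ∀ t : ℝ, ψ t = 1 ∨ ψ t = -1 := by
    intro t
    rcases hφval t with h' | h' <;> simp [hψ, h']
  have hψπ : ψ Real.pi = -ψ 0 := by
    simp [hψ, h0, hπ]
  have hpi : (0 : ℝ) ≤ Real.pi := Real.pi_pos.le
  rcases hψval 0 with hc | hc
  · have hmem : (0 : ℝ) ∈ Set.Icc (ψ Real.pi) (ψ 0) := by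
      rw [hψπ, hc]; norm_num
    obtain ⟨t, _, ht⟩ := intermediate_value_Icc' hpi hψc.continuousOn hmem
    rcases hψval t with h' | h' <;> simp [ht] at h' <;> norm_num at h'
  · have hmem : (0 : ℝ) ∈ Set.Icc (ψ 0) (ψ Real.pi) := by
      rw [hψπ, hc]; norm_num
    obtain ⟨t, _, ht⟩ := intermediate_value_Icc hpi hψc.continuousOn hmem
    rcases hψval t with h' | h' <;> simp [ht] at h' <;> norm_num at h'
end

section
/- For every natural number n ≥ 2, there does not exist a continuous function f : ℂⁿ → ℂ such that for all a = (a₀, a₁, …, a_{n−1}) ∈ ℂⁿ, f(a)ⁿ + a_{n−1} f(a)^{n−1} + ⋯ + a₁ f(a) + a₀ = 0; i.e., there is no continuous single-valued choice of a root of the general monic degree-n polynomial as a function of its coefficients. -/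
open Complex

theorem no_continuous_root_of_general_monic (n : ℕ) (hn : 2 ≤ n) :
    ¬ ∃ f : (Fin n → ℂ) → ℂ, Continuous f ∧
      ∀ a : Fin n → ℂ, f a ^ n + ∑ i : Fin n, a i * f a ^ (i : ℕ) = 0 := by
  rintro ⟨f, hf, hroot⟩
  have hn0 : (n : ℂ) ≠ 0 := Nat.cast_ne_zero.mpr (by omega)
  -- g c is an n-th root of c
  set g : ℂ → ℂ := fun c => f (fun i => if (i:ℕ) = 0 then -c else 0) with hg
  have hgc : Continuous g := by
    apply hf.comp
    apply continuous_pi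
    intro i
    by_cases h : (i:ℕ) = 0 <;> simp only [h, if_true, if_false] <;> fun_prop
  have hgn : ∀ c : ℂ, g c ^ n = c := by
    intro c
    have := hroot (fun i => if (i:ℕ) = 0 then -c else 0)
    rw [Fintype.sum_eq_single (⟨0, by omega⟩ : Fin n)] at this
    · simp at this; linear_combination this
    · intro i hi
      have : (i:ℕ) ≠ 0 := fun h => hi (Fin.ext h)
      simp [this]
  -- build continuous map into n-th roots of unity
  have hker : ∀ t : ℝ, (g (Complex.exp (t * I)) / Complex.exp (t * I / n)) ^ n = 1 := by
    intro t
    have he : Complex.exp (t * I / n) ^ n = Complex.exp (t * I) := by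
      rw [← Complex.exp_nat_mul]
      congr 1
      field_simp
    rw [div_pow, hgn, he, div_self (Complex.exp_ne_zero _)]
  set k : ℝ → {z : ℂ // z ^ n = 1} := fun t =>
    ⟨g (Complex.exp (t * I)) / Complex.exp (t * I / n), hker t⟩ with hk
  have hkc : Continuous k := by
    apply Continuous.subtype_mk
    apply Continuous.div
    · exact hgc.comp (by fun_prop)
    · fun_prop
    · intro t; exact Complex.exp_ne_zero _
  haveI : Finite {z : ℂ // z ^ n = 1} := by
    have : {z : ℂ | z ^ n = 1}.Finite := by
      apply Set.Finite.subset (Polynomial.finite_setOf_isRoot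
        (p := (Polynomial.X ^ n - 1 : Polynomial ℂ)) ?_)
      · intro z hz
        simp [Polynomial.IsRoot, sub_eq_zero]
        exact hz
      · intro h
        have := congrArg (Polynomial.eval 0) h
        simp [zero_pow (show n ≠ 0 by omega)] at this
    exact this
  haveI : DiscreteTopology {z : ℂ // z ^ n = 1} := by
    infer_instance
  have hconst : k 0 = k (2 * Real.pi) := by
    have : IsLocallyConstant k := (IsLocallyConstant.iff_continuous k).mpr hkc
    exact this.apply_eq_of_preconnectedSpace 0 (2 * Real.pi)
  have he2pi : Complex.exp ((2 * Real.pi : ℝ) * I) = 1 := by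
    push_cast
    exact Complex.exp_two_pi_mul_I
  have := congrArg Subtype.val hconst
  simp only [hk] at this
  rw [he2pi] at this
  simp only [Complex.ofReal_zero, zero_mul, zero_div, Complex.exp_zero, div_one] at this
  have hgne : g 1 ≠ 0 := by
    intro h
    have := hgn 1
    rw [h] at this
    simp [zero_pow (show n ≠ 0 by omega)] at this
  have hexp : Complex.exp ((2 * Real.pi : ℝ) * I / n) = 1 := by
    rw [eq_div_iff (Complex.exp_ne_zero _)] at this
    exact mul_left_cancel₀ hgne (by linear_combination this)
  rw [Complex.exp_eq_one_iff] at hexp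
  obtain ⟨m, hm⟩ := hexp
  have h2 : (2 * (Real.pi:ℂ) * Complex.I) ≠ 0 := by
    simp [Complex.I_ne_zero, Real.pi_ne_zero]
  have hIm : (m : ℂ) * n = 1 := by
    have h3 := congrArg (· * (n : ℂ)) hm
    rw [div_mul_cancel₀ _ hn0] at h3
    push_cast at h3
    apply mul_left_cancel₀ h2
    linear_combination -h3
  have hZ : (m * n : ℤ) = 1 := by exact_mod_cast hIm
  have hdvd : (n:ℤ) ∣ 1 := ⟨m, by linear_combination -hZ⟩
  have h1 : (n:ℤ) ≤ 1 := Int.le_of_dvd one_pos hdvd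
  have : (n:ℤ) ≥ 2 := by exact_mod_cast hn
  omega
end
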